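/- arXiv:2209.14428 — 2 statements merged into one kernel-verified Lean document; each statement's English description precedes it below -/
import Mathlib

section
/- Let Q_k be the polynomials with generating function (1/(1-t)) cosh(√x log((1+√t)/(1-√t))) and let M_n be the Mittag-Leffler polynomials with generating function ∑_n M_n(x) t^n = exp(x log((1+t)/(1-t))). Then Q_k(x) = ∑_{j=0}^k M_{2j}(√x) for every k ≥ 0. -/
open PowerSeries Finset

/-- Substitution `t ↦ t²` on power series. -/
noncomputable def expand2 (f : PowerSeries (Polynomial ℚ)) : PowerSeries (Polynomial ℚ) :=
  PowerSeries.mk fun n => if 2 ∣ n then PowerSeries.coeff (n / 2) f else 0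

lemma coeff_expand2 (f : PowerSeries (Polynomial ℚ)) (n : ℕ) :
    PowerSeries.coeff (2 * n) (expand2 f) = PowerSeries.coeff n f := by
  simp [expand2]

lemma coeff_expand2_odd (f : PowerSeries (Polynomial ℚ)) (n : ℕ) (h : ¬ 2 ∣ n) :
    PowerSeries.coeff n (expand2 f) = 0 := by
  simp [expand2, h]

lemma sum_range_even {M : Type*} [AddCommMonoid M] (F : ℕ → M) (N : ℕ)
    (h : ∀ a, ¬ 2 ∣ a → F a = 0) :
    ∑ a ∈ range (2 * N), F a = ∑ c ∈ range N, F (2 * c) := by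
  induction N with
  | zero => simp
  | succ n ih =>
      have e : 2 * (n + 1) = (2 * n + 1) + 1 := by ring
      rw [e, sum_range_succ, sum_range_succ, h (2 * n + 1) (by omega), add_zero,
        sum_range_succ, ih]

lemma expand2_mul (f g : PowerSeries (Polynomial ℚ)) :
    expand2 (f * g) = expand2 f * expand2 g := by
  refine PowerSeries.ext fun n => ?_
  rw [PowerSeries.coeff_mul, Finset.Nat.sum_antidiagonal_eq_sum_range_succ_mk]
  rcases Nat.even_or_odd n with ⟨m, hm⟩ | ⟨m, hm⟩
  · have hn : n = 2 * m := by omega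
    subst hn
    rw [coeff_expand2, PowerSeries.coeff_mul,
      Finset.Nat.sum_antidiagonal_eq_sum_range_succ_mk]
    have h2 : ∑ a ∈ range (2 * (m + 1)),
        (PowerSeries.coeff a (expand2 f)) * (PowerSeries.coeff (2 * m - a) (expand2 g))
        = ∑ a ∈ range (2 * m + 1),
        (PowerSeries.coeff a (expand2 f)) * (PowerSeries.coeff (2 * m - a) (expand2 g)) := by
      have e : 2 * (m + 1) = (2 * m + 1) + 1 := by ring
      rw [e, sum_range_succ, coeff_expand2_odd f (2 * m + 1) (by omega), zero_mul, add_zero]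
    simp only [Nat.succ_eq_add_one]
    rw [← h2, sum_range_even _ (m + 1)
      (fun a ha => by rw [coeff_expand2_odd f a ha, zero_mul])]
    refine Finset.sum_congr rfl fun c hc => ?_
    have hc' : c ≤ m := Nat.lt_succ_iff.mp (Finset.mem_range.mp hc)
    have e2 : 2 * m - 2 * c = 2 * (m - c) := by omega
    rw [coeff_expand2, e2, coeff_expand2]
  · rw [coeff_expand2_odd _ n (by omega : ¬ 2 ∣ n)]
    refine (Finset.sum_eq_zero fun a ha => ?_).symm
    have hle := Finset.mem_range.mp ha
    rcases Nat.even_or_odd a with ⟨b, hb⟩ | ⟨b, hb⟩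
    · rw [coeff_expand2_odd g (n - a) (by omega), mul_zero]
    · rw [coeff_expand2_odd f a (by omega), zero_mul]

lemma expand2_one : expand2 (1 : PowerSeries (Polynomial ℚ)) = 1 := by
  refine PowerSeries.ext fun n => ?_
  rcases Nat.eq_zero_or_pos n with rfl | hn
  · simp [expand2]
  · rw [PowerSeries.coeff_one, if_neg (by omega)]
    rcases Nat.even_or_odd n with ⟨m, hm⟩ | ⟨m, hm⟩
    · have hn2 : n = 2 * m := by omega
      subst hn2
      rw [coeff_expand2, PowerSeries.coeff_one, if_neg (by omega)]
    · exact coeff_expand2_odd _ n (by omega)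

lemma expand2_pow (f : PowerSeries (Polynomial ℚ)) (n : ℕ) :
    expand2 (f ^ n) = (expand2 f) ^ n := by
  induction n with
  | zero => simpa using expand2_one
  | succ m ih => rw [pow_succ, pow_succ, expand2_mul, ih]

lemma expand2_X : expand2 (PowerSeries.X : PowerSeries (Polynomial ℚ)) = PowerSeries.X ^ 2 := by
  refine PowerSeries.ext fun n => ?_
  rw [PowerSeries.coeff_X_pow]
  rcases Nat.even_or_odd n with ⟨m, hm⟩ | ⟨m, hm⟩
  · have hn : n = 2 * m := by omega
    subst hn
    rw [coeff_expand2, PowerSeries.coeff_X]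
    by_cases h : m = 1
    · subst h; norm_num
    · rw [if_neg h, if_neg (by omega)]
  · rw [coeff_expand2_odd _ n (by omega), if_neg (by omega)]
/-- The power series `S(t) = ∑ 2 t^m/(2m+1)`, so that
`log((1+√t)/(1-√t)) = √t · S(t)`. -/
noncomputable def Sser : PowerSeries (Polynomial ℚ) :=
  PowerSeries.mk fun m => Polynomial.C (2 / (2 * (m : ℚ) + 1))

/-- The geometric series `1/(1-t)`. -/
noncomputable def geomSer : PowerSeries (Polynomial ℚ) :=
  PowerSeries.mk fun _ => (1 : Polynomial ℚ)

/-- The `n`-th term `x^n (t·S(t)²)^n / (2n)!` in the expansion of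
`cosh(√x log((1+√t)/(1-√t)))`. -/
noncomputable def coshTerm (n : ℕ) : PowerSeries (Polynomial ℚ) :=
  PowerSeries.C (R := Polynomial ℚ)
      (Polynomial.C ((Nat.factorial (2 * n) : ℚ)⁻¹) * Polynomial.X ^ n) *
    (PowerSeries.X * Sser ^ 2) ^ n

/-- The polynomial `Q_k`, the coefficient of `t^k` in
`(1/(1-t)) cosh(√x log((1+√t)/(1-√t)))`.  (Terms `coshTerm n` with `n > k`
have `t`-order greater than `k`, so the truncated sum suffices.) -/
noncomputable def Qpoly (k : ℕ) : Polynomial ℚ :=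
  PowerSeries.coeff (R := Polynomial ℚ) k
    (geomSer * ∑ n ∈ Finset.range (k + 1), coshTerm n)

/-- The power series `log((1+t)/(1-t)) = ∑_{m odd} 2 t^m/m`. -/
noncomputable def Lser : PowerSeries (Polynomial ℚ) :=
  PowerSeries.mk fun m => if Odd m then Polynomial.C (2 / (m : ℚ)) else 0

/-- The `j`-th term `x^j log((1+t)/(1-t))^j / j!` in the expansion of
`((1+t)/(1-t))^x = exp(x log((1+t)/(1-t)))`. -/
noncomputable def mlTerm (j : ℕ) : PowerSeries (Polynomial ℚ) :=
  PowerSeries.C (R := Polynomial ℚ)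
      (Polynomial.C ((Nat.factorial j : ℚ)⁻¹) * Polynomial.X ^ j) * Lser ^ j

/-- The Mittag-Leffler polynomial `M_n`, the coefficient of `t^n` in
`((1+t)/(1-t))^x`.  (Terms `mlTerm j` with `j > n` have `t`-order greater
than `n`, so the truncated sum suffices.) -/
noncomputable def ML (n : ℕ) : Polynomial ℚ :=
  PowerSeries.coeff (R := Polynomial ℚ) n (∑ j ∈ Finset.range (n + 1), mlTerm j)

/-- The substitution `x ↦ x²` on coefficients, as a ring hom. -/
noncomputable def sigma2 : Polynomial ℚ →+* Polynomial ℚ :=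
  Polynomial.eval₂RingHom Polynomial.C (Polynomial.X ^ 2)

lemma sigma2_apply (f : Polynomial ℚ) : sigma2 f = f.comp (Polynomial.X ^ 2) := rfl

lemma sigma2_C (q : ℚ) : sigma2 (Polynomial.C q) = Polynomial.C q := Polynomial.eval₂_C _ _

lemma map_sigma2_Sser : PowerSeries.map sigma2 Sser = Sser := by
  refine PowerSeries.ext fun n => ?_
  rw [PowerSeries.coeff_map]
  simp [Sser, sigma2_C]

lemma map_sigma2_X :
    PowerSeries.map sigma2 (PowerSeries.X : PowerSeries (Polynomial ℚ)) = PowerSeries.X := by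
  refine PowerSeries.ext fun n => ?_
  rw [PowerSeries.coeff_map]
  simp only [PowerSeries.coeff_X]
  split <;> simp

lemma Lser_eq : Lser = PowerSeries.X * expand2 Sser := by
  refine PowerSeries.ext fun n => ?_
  rw [mul_comm, ← pow_one (PowerSeries.X : PowerSeries (Polynomial ℚ)),
    PowerSeries.coeff_mul_X_pow']
  rcases Nat.eq_zero_or_pos n with rfl | hn
  · simp [Lser]
  · rw [if_pos (by omega : 1 ≤ n)]
    rcases Nat.even_or_odd n with ⟨m, hm⟩ | ⟨m, hm⟩
    · rw [coeff_expand2_odd _ (n - 1) (by omega)]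
      simp only [Lser, PowerSeries.coeff_mk]
      rw [if_neg (by rw [Nat.odd_iff]; omega)]
    · have h1 : n - 1 = 2 * m := by omega
      rw [h1, coeff_expand2]
      simp only [Lser, Sser, PowerSeries.coeff_mk]
      rw [if_pos (by rw [Nat.odd_iff]; omega)]
      congr 1
      rw [hm]
      push_cast
      ring

lemma Lser_sq : Lser ^ 2 = expand2 (PowerSeries.X * Sser ^ 2) := by
  rw [expand2_mul, expand2_X, expand2_pow, Lser_eq, mul_pow]

lemma coshTerm_eq (n : ℕ) :
    coshTerm n = (PowerSeries.C (R := Polynomial ℚ)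
        (Polynomial.C ((Nat.factorial (2 * n) : ℚ)⁻¹) * Polynomial.X ^ n) * (Sser ^ 2) ^ n)
      * PowerSeries.X ^ n := by
  rw [coshTerm, mul_pow]; ring

lemma mlTerm_eq (m : ℕ) :
    mlTerm m = (PowerSeries.C (R := Polynomial ℚ)
        (Polynomial.C ((Nat.factorial m : ℚ)⁻¹) * Polynomial.X ^ m) * (expand2 Sser) ^ m)
      * PowerSeries.X ^ m := by
  rw [mlTerm, Lser_eq, mul_pow]; ring

lemma coshTerm_coeff_zero {j n : ℕ} (h : j < n) :
    PowerSeries.coeff j (coshTerm n) = 0 := by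
  rw [coshTerm_eq, PowerSeries.coeff_mul_X_pow', if_neg (by omega)]

lemma mlTerm_coeff_zero {e m : ℕ} (h : e < m) :
    PowerSeries.coeff e (mlTerm m) = 0 := by
  rw [mlTerm_eq, PowerSeries.coeff_mul_X_pow', if_neg (by omega)]

lemma mlTerm_coeff_odd (j : ℕ) {m : ℕ} (h : ¬ 2 ∣ m) :
    PowerSeries.coeff (2 * j) (mlTerm m) = 0 := by
  rcases lt_or_ge (2 * j) m with hlt | hge
  · exact mlTerm_coeff_zero hlt
  · rw [mlTerm_eq, PowerSeries.coeff_mul_X_pow', if_pos hge, PowerSeries.coeff_C_mul,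
      ← expand2_pow, coeff_expand2_odd _ (2 * j - m) (by omega), mul_zero]

lemma key (n j : ℕ) :
    sigma2 (PowerSeries.coeff j (coshTerm n))
      = PowerSeries.coeff (2 * j) (mlTerm (2 * n)) := by
  have hL : Lser ^ (2 * n) = expand2 ((PowerSeries.X * Sser ^ 2) ^ n) := by
    rw [expand2_pow, ← Lser_sq, ← pow_mul]
  rw [mlTerm, hL, PowerSeries.coeff_C_mul, coeff_expand2,
    coshTerm, PowerSeries.coeff_C_mul, map_mul]
  congr 1
  · rw [map_mul, sigma2_C, map_pow,
      show sigma2 Polynomial.X = Polynomial.X ^ 2 from Polynomial.eval₂_X _ _, ← pow_mul]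
  · have hmap : PowerSeries.map sigma2 ((PowerSeries.X * Sser ^ 2) ^ n)
        = (PowerSeries.X * Sser ^ 2) ^ n := by
      rw [map_pow, map_mul, map_sigma2_X, map_pow, map_sigma2_Sser]
    rw [← PowerSeries.coeff_map, hmap]

lemma coeff_geom_mul (F : PowerSeries (Polynomial ℚ)) (k : ℕ) :
    PowerSeries.coeff k (geomSer * F) = ∑ j ∈ range (k + 1), PowerSeries.coeff j F := by
  rw [PowerSeries.coeff_mul, Finset.Nat.sum_antidiagonal_eq_sum_range_succ_mk]
  simp only [geomSer, PowerSeries.coeff_mk, one_mul]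
  rw [← Finset.sum_range_reflect (fun a => PowerSeries.coeff a F) (k + 1)]
  exact Finset.sum_congr rfl fun a _ => by congr 1

lemma ML_eq (j : ℕ) :
    ML (2 * j) = ∑ n ∈ range (j + 1), PowerSeries.coeff (2 * j) (mlTerm (2 * n)) := by
  rw [ML, map_sum]
  have h1 : ∑ m ∈ range (2 * (j + 1)), PowerSeries.coeff (2 * j) (mlTerm m)
      = ∑ m ∈ range (2 * j + 1), PowerSeries.coeff (2 * j) (mlTerm m) := by
    rw [show 2 * (j + 1) = (2 * j + 1) + 1 by ring, sum_range_succ,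
      mlTerm_coeff_zero (by omega), add_zero]
  rw [← h1, sum_range_even _ (j + 1) (fun a ha => mlTerm_coeff_odd j ha)]

/-- `Q_k(x) = ∑_{j=0}^k M_{2j}(√x)`, stated equivalently (since each `M_{2j}`
is an even polynomial) as `Q_k(x²) = ∑_{j=0}^k M_{2j}(x)`. -/
theorem stmt7 (k : ℕ) :
    (Qpoly k).comp (Polynomial.X ^ 2) = ∑ j ∈ Finset.range (k + 1), ML (2 * j) := by
  rw [← sigma2_apply, Qpoly, coeff_geom_mul, map_sum]
  refine Finset.sum_congr rfl fun j hj => ?_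
  have hjk : j + 1 ≤ k + 1 := Finset.mem_range.mp hj
  have htr : ∑ n ∈ range (j + 1), PowerSeries.coeff j (coshTerm n)
      = ∑ n ∈ range (k + 1), PowerSeries.coeff j (coshTerm n) :=
    Finset.sum_subset (Finset.range_subset_range.mpr hjk)
      (fun n _ hn => coshTerm_coeff_zero (by
        simp only [Finset.mem_range, not_lt] at hn; omega))
  rw [map_sum (PowerSeries.coeff j), ← htr, map_sum, ML_eq]
  exact Finset.sum_congr rfl fun n _ => key n j
end

section
/- Let Q_k be the polynomials with generating function Φ(x,t) = (1/(1-t)) cosh(√x log((1+√t)/(1-√t))). Then for every k ≥ 0, the dilatation operator satisfies x Q_k'(x) = k Q_k(x) - ∑_{m=1}^{k} [(2k+1)/((2m-1)(2m+1))] Q_{k-m}(x). -/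
open PowerSeries Finset

noncomputable def Sq : PowerSeries ℚ := PowerSeries.mk fun m => 2 / (2 * (m : ℚ) + 1)
noncomputable def Gq : PowerSeries ℚ := PowerSeries.mk fun _ => (1 : ℚ)
noncomputable def Userq : PowerSeries ℚ :=
  PowerSeries.mk fun m => if m = 0 then 0 else 1 / ((2 * (m : ℚ) - 1) * (2 * (m : ℚ) + 1))
noncomputable def Vserq : PowerSeries ℚ :=
  PowerSeries.mk fun m => if m = 0 then 0 else 2 * m / ((2 * (m : ℚ) - 1) * (2 * (m : ℚ) + 1))
noncomputable def Fq (n : ℕ) : PowerSeries ℚ := PowerSeries.X ^ n * Sq ^ (2 * n) * Gq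

lemma twom1 (m : ℕ) : (2 * (m:ℚ) + 1) ≠ 0 := by positivity
lemma twom1' (m : ℕ) (hm : 1 ≤ m) : (2 * (m:ℚ) - 1) ≠ 0 := by
  have : (1:ℚ) ≤ m := by exact_mod_cast hm
  nlinarith

lemma coeff_X_mul' (f : PowerSeries ℚ) (k : ℕ) :
    PowerSeries.coeff (R := ℚ) k (PowerSeries.X * f) = if k = 0 then 0 else PowerSeries.coeff (R := ℚ) (k-1) f := by
  cases k with
  | zero => simp
  | succ j => simp [PowerSeries.coeff_succ_X_mul]

lemma coeff_two_mul (f : PowerSeries ℚ) (k : ℕ) :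
    PowerSeries.coeff (R := ℚ) k (2 * f) = 2 * PowerSeries.coeff (R := ℚ) k f := by
  rw [show (2 : PowerSeries ℚ) = PowerSeries.C (R := ℚ) 2 from (map_ofNat _ 2).symm,
    PowerSeries.coeff_C_mul]

lemma coeff_four_mul (f : PowerSeries ℚ) (k : ℕ) :
    PowerSeries.coeff (R := ℚ) k (4 * f) = 4 * PowerSeries.coeff (R := ℚ) k f := by
  rw [show (4 : PowerSeries ℚ) = PowerSeries.C (R := ℚ) 4 from (map_ofNat _ 4).symm,
    PowerSeries.coeff_C_mul]

lemma I4 : (1 - PowerSeries.X) * Gq = 1 := by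
  ext k
  rw [sub_mul, one_mul, map_sub, coeff_X_mul']
  cases k <;> simp [Gq, PowerSeries.coeff_one]

lemma I1 : (1 - PowerSeries.X) * Sq = 2 - 4 * Userq := by
  ext k
  rw [sub_mul, one_mul, map_sub, coeff_X_mul', map_sub, coeff_four_mul]
  cases k with
  | zero =>
    simp [Sq, Userq, PowerSeries.coeff_mk]
    exact (map_ofNat (PowerSeries.constantCoeff (R := ℚ)) 2).symm
  | succ j =>
    simp only [Sq, Userq, PowerSeries.coeff_mk, Nat.succ_ne_zero, if_false, Nat.add_sub_cancel]
    rw [show (2 : PowerSeries ℚ) = PowerSeries.C (R := ℚ) 2 from (map_ofNat _ 2).symm,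
      PowerSeries.coeff_C]
    simp only [Nat.succ_ne_zero, if_false]
    have h1 := twom1 j
    have h2' := twom1 (j+1)
    have h3 : (2 * ((j:ℚ)+1) - 1) ≠ 0 := by
      have := twom1' (j+1) (by omega); push_cast at this ⊢; linarith [this]
    push_cast
    field_simp
    ring

lemma I2 : (1 + PowerSeries.X) * Sq = 2 + 4 * Vserq := by
  ext k
  rw [add_mul, one_mul, map_add, coeff_X_mul', map_add, coeff_four_mul]
  cases k with
  | zero =>
    simp [Sq, Vserq, PowerSeries.coeff_mk]
    exact (map_ofNat (PowerSeries.constantCoeff (R := ℚ)) 2).symm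
  | succ j =>
    simp only [Sq, Vserq, PowerSeries.coeff_mk, Nat.succ_ne_zero, if_false, Nat.add_sub_cancel]
    rw [show (2 : PowerSeries ℚ) = PowerSeries.C (R := ℚ) 2 from (map_ofNat _ 2).symm,
      PowerSeries.coeff_C]
    simp only [Nat.succ_ne_zero, if_false]
    have h1 := twom1 j
    have h2' := twom1 (j+1)
    have h3 : (2 * ((j:ℚ)+1) - 1) ≠ 0 := by
      have := twom1' (j+1) (by omega); push_cast at this ⊢; linarith [this]
    push_cast
    field_simp
    ring

lemma I3 : 2 * (PowerSeries.X * (d⁄dX ℚ) Sq) = 2 * Gq - Sq := by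
  ext k
  rw [coeff_two_mul, coeff_X_mul', map_sub, coeff_two_mul]
  cases k with
  | zero => simp [Sq, Gq, PowerSeries.coeff_mk]
  | succ j =>
    simp only [Nat.succ_ne_zero, if_false, Nat.add_sub_cancel, PowerSeries.coeff_derivative]
    simp only [Sq, Gq, PowerSeries.coeff_mk]
    have h2' := twom1 (j+1)
    push_cast at h2' ⊢
    field_simp
    ring


lemma starEq (n : ℕ) :
    (1 - PowerSeries.X) * Sq * (PowerSeries.X * (d⁄dX ℚ) (Fq n)) =
      2 * (n : PowerSeries ℚ) * Fq n + PowerSeries.X * Sq * Fq n := by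
  induction n with
  | zero =>
    have h0 : Fq 0 = Gq := by simp [Fq]
    have hD : (d⁄dX ℚ) (Fq 0) = Gq * Gq := by
      rw [h0]
      have : (d⁄dX ℚ) Gq = Gq * Gq := by
        ext k
        rw [PowerSeries.coeff_derivative, PowerSeries.coeff_mul]
        simp [Gq, PowerSeries.coeff_mk, Finset.Nat.card_antidiagonal]
      exact this
    rw [hD, h0]
    push_cast
    linear_combination (PowerSeries.X * Sq * Gq) * I4
  | succ n ih =>
    have hrw : Fq (n + 1) = (PowerSeries.X * Sq ^ 2) * Fq n := by
      simp only [Fq]; ring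
    have hD : (d⁄dX ℚ) (Fq (n + 1)) =
        (PowerSeries.X * Sq ^ 2) * (d⁄dX ℚ) (Fq n)
          + Fq n * (Sq ^ 2 + PowerSeries.X * (2 * Sq * (d⁄dX ℚ) Sq)) := by
      rw [hrw, Derivation.leibniz, Derivation.leibniz, Derivation.leibniz_pow]
      simp only [smul_eq_mul, PowerSeries.derivative_X, Nat.cast_ofNat, pow_one, mul_one]
      ring
    rw [hD, hrw]
    push_cast
    linear_combination (PowerSeries.X * Sq ^ 2) * ih
      + (PowerSeries.X * Sq ^ 2 * Fq n * (1 - PowerSeries.X)) * I3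
      + (2 * PowerSeries.X * Sq ^ 2 * Fq n) * I4
lemma star2 (n : ℕ) :
    PowerSeries.X * (d⁄dX ℚ) (Fq n) =
      Userq * (2 * (PowerSeries.X * (d⁄dX ℚ) (Fq n)) + Fq n) + Vserq * Fq n
        + (n : PowerSeries ℚ) * Fq n := by
  have h4 : (4 : PowerSeries ℚ) ≠ 0 := by
    intro h
    have := congrArg (PowerSeries.constantCoeff (R := ℚ)) h
    rw [map_ofNat] at this
    norm_num at this
  apply mul_left_cancel₀ h4
  linear_combination 2 * starEq n
    - (2 * (PowerSeries.X * (d⁄dX ℚ) (Fq n)) + Fq n) * I1 + Fq n * I2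

noncomputable def rr (n k : ℕ) : ℚ := PowerSeries.coeff (R := ℚ) k (Fq n)

lemma coeff_XD (f : PowerSeries ℚ) (k : ℕ) :
    PowerSeries.coeff (R := ℚ) k (PowerSeries.X * (d⁄dX ℚ) f) = k * PowerSeries.coeff (R := ℚ) k f := by
  cases k with
  | zero => simp
  | succ j =>
    rw [PowerSeries.coeff_succ_X_mul, PowerSeries.coeff_derivative]
    push_cast; ring

lemma coeff_mk_mul (w : ℕ → ℚ) (hw : w 0 = 0) (f : PowerSeries ℚ) (k : ℕ) :
    PowerSeries.coeff (R := ℚ) k (PowerSeries.mk w * f)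
      = ∑ m ∈ Finset.Icc 1 k, w m * PowerSeries.coeff (R := ℚ) (k - m) f := by
  rw [PowerSeries.coeff_mul, Finset.Nat.sum_antidiagonal_eq_sum_range_succ_mk]
  have h : Finset.range (k + 1) = insert 0 (Finset.Icc 1 k) := by
    ext x; simp; omega
  rw [h, Finset.sum_insert (by simp)]
  simp [PowerSeries.coeff_mk, hw]

lemma coeff_natCast_mul (n : ℕ) (f : PowerSeries ℚ) (k : ℕ) :
    PowerSeries.coeff (R := ℚ) k ((n : PowerSeries ℚ) * f) = n * PowerSeries.coeff (R := ℚ) k f := by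
  rw [show ((n : PowerSeries ℚ)) = PowerSeries.C (R := ℚ) (n : ℚ) from (map_natCast _ n).symm,
    PowerSeries.coeff_C_mul]

lemma key_s8 (n k : ℕ) :
    ((k : ℚ) - n) * rr n k =
      ∑ m ∈ Finset.Icc 1 k,
        ((2 * (k : ℚ) + 1) / ((2 * (m : ℚ) - 1) * (2 * (m : ℚ) + 1))) * rr n (k - m) := by
  have h := congrArg (PowerSeries.coeff (R := ℚ) k) (star2 n)
  rw [coeff_XD, map_add, map_add, coeff_natCast_mul] at h
  rw [show Userq = PowerSeries.mk fun m =>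
      if m = 0 then 0 else 1 / ((2 * (m : ℚ) - 1) * (2 * (m : ℚ) + 1)) from rfl,
    show Vserq = PowerSeries.mk fun m =>
      if m = 0 then 0 else 2 * m / ((2 * (m : ℚ) - 1) * (2 * (m : ℚ) + 1)) from rfl,
    coeff_mk_mul _ (by simp) _ _, coeff_mk_mul _ (by simp) _ _] at h
  simp only [map_add, coeff_two_mul, coeff_XD] at h
  rw [← Finset.sum_add_distrib] at h
  have hs : (∑ m ∈ Finset.Icc 1 k,
      ((if m = 0 then (0:ℚ) else 1 / ((2 * (m : ℚ) - 1) * (2 * (m : ℚ) + 1))) *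
          (2 * ((↑(k - m) : ℚ) * PowerSeries.coeff (R := ℚ) (k - m) (Fq n))
            + PowerSeries.coeff (R := ℚ) (k - m) (Fq n))
        + (if m = 0 then (0:ℚ) else 2 * m / ((2 * (m : ℚ) - 1) * (2 * (m : ℚ) + 1))) *
            PowerSeries.coeff (R := ℚ) (k - m) (Fq n)))
      = ∑ m ∈ Finset.Icc 1 k,
        ((2 * (k : ℚ) + 1) / ((2 * (m : ℚ) - 1) * (2 * (m : ℚ) + 1))) * rr n (k - m) := by
    apply Finset.sum_congr rfl
    intro m hm
    rw [Finset.mem_Icc] at hm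
    rw [if_neg (by omega), if_neg (by omega)]
    have hcast : ((k - m : ℕ) : ℚ) = (k : ℚ) - m := by
      rw [Nat.cast_sub hm.2]
    rw [hcast]
    have h1 := twom1 m
    have h2 := twom1' m hm.1
    unfold rr
    field_simp
    ring
  rw [hs] at h
  simp only [rr] at h ⊢
  linarith [h]

noncomputable def dd (n k : ℕ) : ℚ := ((Nat.factorial (2 * n) : ℚ))⁻¹ * rr n k
lemma Sser_eq : Sser = PowerSeries.map Polynomial.C Sq := by
  ext k; simp [Sser, Sq, PowerSeries.coeff_map]
lemma geomSer_eq : geomSer = PowerSeries.map Polynomial.C Gq := by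
  ext k; simp [geomSer, Gq, PowerSeries.coeff_map]

lemma rr_eq_zero (n k : ℕ) (h : k < n) : rr n k = 0 := by
  unfold rr
  have : Fq n = PowerSeries.X ^ n * (Sq ^ (2 * n) * Gq) := by rw [Fq, mul_assoc]
  rw [this, PowerSeries.coeff_X_pow_mul', if_neg (by omega)]

lemma dd_eq_zero (n k : ℕ) (h : k < n) : dd n k = 0 := by
  rw [dd, rr_eq_zero n k h, mul_zero]

lemma Qpoly_eq (k : ℕ) :
    Qpoly k = ∑ n ∈ Finset.range (k + 1), Polynomial.C (dd n k) * Polynomial.X ^ n := by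
  unfold Qpoly
  rw [Finset.mul_sum, map_sum]
  refine Finset.sum_congr rfl fun n _ => ?_
  have h1 : geomSer * coshTerm n =
      PowerSeries.C (R := Polynomial ℚ)
        (Polynomial.C ((Nat.factorial (2 * n) : ℚ)⁻¹) * Polynomial.X ^ n) *
        (PowerSeries.map Polynomial.C (Fq n)) := by
    rw [coshTerm, Sser_eq, geomSer_eq, Fq]
    simp only [map_mul, map_pow, PowerSeries.map_X]
    ring
  rw [h1, PowerSeries.coeff_C_mul, PowerSeries.coeff_map]
  rw [show (PowerSeries.coeff (R := ℚ) k) (Fq n) = rr n k from rfl]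
  rw [dd, Polynomial.C_mul]
  ring

lemma Qpoly_eq' (j k : ℕ) (hjk : j ≤ k) :
    Qpoly j = ∑ n ∈ Finset.range (k + 1), Polynomial.C (dd n j) * Polynomial.X ^ n := by
  rw [Qpoly_eq j]
  apply Finset.sum_subset
  · intro x hx; rw [Finset.mem_range] at *; omega
  · intro x _ hx
    rw [Finset.mem_range, not_lt] at hx
    rw [dd_eq_zero x j (by omega), map_zero, zero_mul]

set_option maxHeartbeats 1000000 in
/-- The dilatation operator acting on `Q_k`. -/
theorem stmt8 (k : ℕ) :
    Polynomial.X * Polynomial.derivative (Qpoly k) =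
      (k : ℚ) • Qpoly k -
        ∑ m ∈ Finset.Icc 1 k,
          ((2 * (k : ℚ) + 1) / ((2 * (m : ℚ) - 1) * (2 * (m : ℚ) + 1))) • Qpoly (k - m) := by
  rw [Qpoly_eq k]
  have hQ : ∀ m ∈ Finset.Icc 1 k,
      ((2 * (k : ℚ) + 1) / ((2 * (m : ℚ) - 1) * (2 * (m : ℚ) + 1))) • Qpoly (k - m)
        = ∑ n ∈ Finset.range (k + 1),
            Polynomial.C (((2 * (k : ℚ) + 1) / ((2 * (m : ℚ) - 1) * (2 * (m : ℚ) + 1)))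
              * dd n (k - m)) * Polynomial.X ^ n := by
    intro m hm
    rw [Qpoly_eq' (k - m) k (by omega), Finset.smul_sum]
    refine Finset.sum_congr rfl fun n _ => ?_
    rw [Polynomial.smul_eq_C_mul, Polynomial.C_mul]; ring
  rw [Finset.sum_congr rfl hQ, Polynomial.derivative_sum, Finset.mul_sum, Finset.smul_sum,
    Finset.sum_comm, ← Finset.sum_sub_distrib]
  refine Finset.sum_congr rfl fun n _ => ?_
  have hL : Polynomial.X * Polynomial.derivative
      (Polynomial.C (dd n k) * Polynomial.X ^ n) =
      Polynomial.C ((n : ℚ) * dd n k) * Polynomial.X ^ n := by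
    cases n with
    | zero => simp
    | succ j =>
      rw [Polynomial.derivative_C_mul_X_pow, Nat.add_sub_cancel,
        mul_comm (((j + 1 : ℕ) : ℚ)) (dd (j + 1) k)]
      ring
  rw [hL, Polynomial.smul_eq_C_mul, ← mul_assoc, ← Polynomial.C_mul, ← Finset.sum_mul,
    ← sub_mul]
  congr 1
  rw [← map_sum, ← map_sub]
  congr 1
  have hkey := congrArg (fun x => ((Nat.factorial (2 * n) : ℚ))⁻¹ * x) (key_s8 n k)
  simp only [Finset.mul_sum] at hkey
  have hsum : ∀ m ∈ Finset.Icc 1 k,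
      ((Nat.factorial (2 * n) : ℚ))⁻¹ *
        (((2 * (k : ℚ) + 1) / ((2 * (m : ℚ) - 1) * (2 * (m : ℚ) + 1))) * rr n (k - m))
      = ((2 * (k : ℚ) + 1) / ((2 * (m : ℚ) - 1) * (2 * (m : ℚ) + 1))) * dd n (k - m) := by
    intro m _; rw [dd]; ring
  rw [Finset.sum_congr rfl hsum] at hkey
  have : ((Nat.factorial (2 * n) : ℚ))⁻¹ * (((k : ℚ) - n) * rr n k)
      = ((k : ℚ) - n) * dd n k := by rw [dd]; ring
  rw [this] at hkey
  linarith [hkey]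
end
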